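/- Suppose σ is a permutation of {0,1,...,l}, v₁,...,v_l is a basis of an l-dimensional real vector space V, v₀ = 0, and u is a linear automorphism of V such that u(v_k) = v_{σ(k)} − v_i for all k ∈ {0,...,l}, where i = σ(0). Then det(u) = sign(σ). -/

import Mathlib

/-- Let `σ` be a permutation of `{0, 1, …, l}`, let `v₁, …, v_l` be a basis
of an `l`-dimensional real vector space `V`, set `v₀ = 0`, and let `u` be a linear
automorphism of `V` such that `u(v_k) = v_{σ(k)} − v_i` for all `k ∈ {0, …, l}`, where
`i = σ(0)`.  Then `det(u) = sign(σ)`. -/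
theorem det_eq_sign_of_perm_vertices
    {V : Type*} [AddCommGroup V] [Module ℝ V] {l : ℕ}
    (σ : Equiv.Perm (Fin (l + 1)))
    (b : Module.Basis (Fin l) ℝ V)
    (v : Fin (l + 1) → V) (hv0 : v 0 = 0) (hv : ∀ k : Fin l, v k.succ = b k)
    (u : V ≃ₗ[ℝ] V)
    (hu : ∀ k : Fin (l + 1), u (v k) = v (σ k) - v (σ 0)) :
    LinearMap.det (u.toLinearMap) = ((Equiv.Perm.sign σ : ℤ) : ℝ) := by
  classical
  -- coordinates of the points v j in the basis b
  set c : Fin (l + 1) → Fin l → ℝ := fun j m => b.repr (v j) m with hc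
  have hc0 : ∀ m, c 0 m = 0 := by intro m; simp [hc, hv0]
  have hcs : ∀ (k : Fin l) (m : Fin l), c k.succ m = if k = m then 1 else 0 := by
    intro k m
    simp [hc, hv k, Finsupp.single_apply]
  set M : Matrix (Fin l) (Fin l) ℝ := LinearMap.toMatrix b b u.toLinearMap with hM
  have hMentry : ∀ m k, M m k = c (σ k.succ) m - c (σ 0) m := by
    intro m k
    rw [hM, LinearMap.toMatrix_apply]
    rw [show (b k : V) = v k.succ from (hv k).symm]
    simp only [LinearEquiv.coe_coe, hu, map_sub, Finsupp.sub_apply]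
    rfl
  -- the affine matrix
  set A : Matrix (Fin (l + 1)) (Fin (l + 1)) ℝ :=
    Matrix.of fun j => Fin.cases (fun k => Fin.cases (1 : ℝ) (fun _ => 0) k)
      (fun m k => Fin.cases (c (σ 0) m) (fun n => M m n) k) j with hA
  have hA00 : A 0 0 = 1 := rfl
  have hA0s : ∀ k : Fin l, A 0 k.succ = 0 := fun k => rfl
  have hAs0 : ∀ m : Fin l, A m.succ 0 = c (σ 0) m := fun m => rfl
  have hAss : ∀ m n : Fin l, A m.succ n.succ = M m n := fun m n => rfl
  -- matrix of "hat" coordinates of the points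
  set H : Matrix (Fin (l + 1)) (Fin (l + 1)) ℝ :=
    Matrix.of fun j k => Fin.cases (1 : ℝ) (fun m => c k m) j with hH
  have hH0 : ∀ k, H 0 k = 1 := fun k => rfl
  have hHs : ∀ (m : Fin l) k, H m.succ k = c k m := fun m k => rfl
  set P : Matrix (Fin (l + 1)) (Fin (l + 1)) ℝ := (σ⁻¹).permMatrix ℝ with hP
  have hPentry : ∀ n k, P n k = if n = σ k then 1 else 0 := by
    intro n k
    rw [hP]
    simp only [Equiv.Perm.permMatrix]
    rw [PEquiv.toMatrix_apply, Equiv.toPEquiv_apply]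
    by_cases h : n = σ k
    · simp [h, Option.mem_def, Equiv.Perm.eq_inv_iff_eq]
    · simp [Option.mem_def, Equiv.Perm.inv_eq_iff_eq, Equiv.symm_apply_eq, h]
  -- key identity A * H = H * P
  have key : A * H = H * P := by
    ext j k
    have hHP : (H * P) j k = H j (σ k) := by
      rw [Matrix.mul_apply]
      rw [Finset.sum_eq_single (σ k)]
      · rw [hPentry]; simp
      · intro n _ hn; rw [hPentry]; simp [hn]
      · simp
    rw [hHP, Matrix.mul_apply, Fin.sum_univ_succ]
    rcases Fin.eq_zero_or_eq_succ j with rfl | ⟨m, rfl⟩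
    · simp [hA00, hA0s, hH0]
    · simp only [hAs0, hAss, hHs, hH0, mul_one]
      rcases Fin.eq_zero_or_eq_succ k with rfl | ⟨k0, rfl⟩
      · simp [hc0]
      · have hsum : ∀ n : Fin l, M m n * c k0.succ n = if n = k0 then M m k0 else 0 := by
          intro n
          rw [hcs k0 n]
          by_cases h : n = k0
          · subst h; simp
          · simp [h, Ne.symm h]
        rw [Finset.sum_congr rfl fun n _ => hsum n,
          Finset.sum_ite_eq' Finset.univ k0 (fun _ => M m k0)]
        simp only [Finset.mem_univ, if_true]
        rw [hMentry m k0]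
        ring
  -- det H = 1
  have hdetH : H.det = 1 := by
    rw [Matrix.det_succ_column_zero, Fin.sum_univ_succ]
    have hz : ∀ m : Fin l, ((-1 : ℝ) ^ ((m.succ : Fin (l+1)) : ℕ)) * H m.succ 0 *
        (H.submatrix (Fin.succAbove m.succ) Fin.succ).det = 0 := by
      intro m
      rw [hHs m 0]
      rw [hc0 m]
      ring
    rw [Finset.sum_eq_zero fun m _ => hz m]
    have : H.submatrix (Fin.succAbove 0) Fin.succ = 1 := by
      ext m n
      simp only [Matrix.submatrix_apply, Fin.succAbove_zero]
      rw [hHs m n.succ, hcs n m, Matrix.one_apply]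
      simp [eq_comm]
    rw [this]
    simp [hH0]
  -- det A = det M
  have hdetA : A.det = M.det := by
    rw [Matrix.det_succ_row_zero, Fin.sum_univ_succ]
    have hz : ∀ k : Fin l, ((-1 : ℝ) ^ ((k.succ : Fin (l+1)) : ℕ)) * A 0 k.succ *
        (A.submatrix Fin.succ (Fin.succAbove k.succ)).det = 0 := by
      intro k
      rw [hA0s k]
      ring
    rw [Finset.sum_eq_zero fun k _ => hz k]
    have : A.submatrix Fin.succ (Fin.succAbove 0) = M := by
      ext m n
      simp only [Matrix.submatrix_apply, Fin.succAbove_zero]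
      exact hAss m n
    rw [this]
    simp [hA00]
  -- put it together
  have hdetP : P.det = ((Equiv.Perm.sign σ : ℤ) : ℝ) := by
    rw [hP, Matrix.det_permutation]
    simp
  have hmul := congrArg Matrix.det key
  rw [Matrix.det_mul, Matrix.det_mul, hdetH, hdetA, hdetP, one_mul, mul_one] at hmul
  rw [LinearMap.det_toMatrix b u.toLinearMap |>.symm, ← hM, hmul]
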